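/- In a DAG, if two nodes j and k are non-adjacent and S is any set d-separating them, then S ∩ an({j, k}), the restriction of S to ancestors of j or k (including j, k themselves), also d-separates j and k. -/

import Mathlib

/-- Directed reachability in a digraph (reflexive-transitive closure of the edge relation). -/
def Reaches {V : Type*} (G : V → V → Prop) : V → V → Prop := Relation.ReflTransGen G

/-- A digraph is acyclic if no vertex lies on a directed cycle. -/
def Acyclic {V : Type*} (G : V → V → Prop) : Prop := ∀ v, ¬ Relation.TransGen G v v

/-- `p` is an (undirected) path from `a` to `b` in the digraph `G`. -/
def IsTrail {V : Type*} (G : V → V → Prop) (a b : V) (p : List V) : Prop :=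
  p.Chain' (fun x y => G x y ∨ G y x) ∧ p.head? = some a ∧ p.getLast? = some b ∧ p.Nodup

/-- Consecutive triples of a list. -/
def triples {V : Type*} : List V → List (V × V × V)
  | x :: y :: z :: r => (x, y, z) :: triples (y :: z :: r)
  | _ => []

/-- A triple `(x, y, z)` on a path is blocked by `S` if `y` is a collider none of whose
descendants lies in `S`, or `y` is a non-collider belonging to `S`. -/
def BlockedTriple {V : Type*} [DecidableEq V] (G : V → V → Prop) (S : Finset V)
    (t : V × V × V) : Prop :=
  (G t.1 t.2.1 ∧ G t.2.2 t.2.1 ∧ ∀ d, Reaches G t.2.1 d → d ∉ S)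
  ∨ (¬ (G t.1 t.2.1 ∧ G t.2.2 t.2.1) ∧ t.2.1 ∈ S)

/-- A path is blocked by `S` if some internal triple is blocked. -/
def Blocked {V : Type*} [DecidableEq V] (G : V → V → Prop) (S : Finset V) (p : List V) : Prop :=
  ∃ t ∈ triples p, BlockedTriple G S t

/-- `S` d-separates `a` and `b` in `G` if every path between them is blocked. -/
def DSep {V : Type*} [DecidableEq V] (G : V → V → Prop) (S : Finset V) (a b : V) : Prop :=
  ∀ p : List V, IsTrail G a b p → Blocked G S p

section Aux
variable {V : Type*}

lemma triples_cons_subset (a : V) : ∀ {q : List V}, triples q ⊆ triples (a :: q)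
  | [], t, ht => by simp [triples] at ht
  | [y], t, ht => by simp [triples] at ht
  | y :: z :: r, t, ht => List.mem_cons_of_mem _ ht

lemma triples_suffix_subset : ∀ (s q : List V), triples q ⊆ triples (s ++ q)
  | [], _ => fun _ h => h
  | a :: s, q => fun _ h => triples_cons_subset a (triples_suffix_subset s q h)

lemma mem_triples_elim {x y z : V} :
    ∀ {p : List V}, (x, y, z) ∈ triples p → ∃ l r, p = l ++ x :: y :: z :: r
  | [], h => by simp [triples] at h
  | [a], h => by simp [triples] at h
  | [a, b], h => by simp [triples] at h
  | a :: b :: c :: r, h => by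
    rcases List.mem_cons.mp h with h | h
    · simp only [Prod.mk.injEq] at h
      obtain ⟨rfl, rfl, rfl⟩ := h
      exact ⟨[], r, rfl⟩
    · obtain ⟨l, r', hr⟩ := mem_triples_elim h
      exact ⟨a :: l, r', by simp [hr]⟩

lemma mem_triples_intro (x y z : V) (l r : List V) :
    (x, y, z) ∈ triples (l ++ x :: y :: z :: r) :=
  triples_suffix_subset l _ (List.mem_cons_self)

lemma forward_lemma (G : V → V → Prop) (An : V → Prop)
    (hstep : ∀ a b, G a b → An b → An a) :
    ∀ (rest : List V) (x y b : V),
      (x :: y :: rest).Chain' (fun u v => G u v ∨ G v u) →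
      (x :: y :: rest).getLast? = some b → An b →
      (∀ t ∈ triples (x :: y :: rest), G t.1 t.2.1 → G t.2.2 t.2.1 → An t.2.1) →
      G x y → An x
  | [], x, y, b, hch, hlast, hb, _, hxy => by
      have : y = b := by simpa using hlast
      exact hstep _ _ hxy (this ▸ hb)
  | z :: r, x, y, b, hch, hlast, hb, hcol, hxy => by
      by_cases hzy : G z y
      · exact hstep _ _ hxy (hcol (x, y, z) (List.mem_cons_self) hxy hzy)
      · have hyz : G y z := by
          have h := (List.isChain_cons_cons.mp (List.isChain_cons_cons.mp hch).2).1
          tauto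
        refine hstep _ _ hxy
          (forward_lemma G An hstep r y z b (List.isChain_cons_cons.mp hch).2 ?_ hb ?_ hyz)
        · simpa using hlast
        · intro t ht; exact hcol t (triples_cons_subset x ht)

end Aux

/-- in a DAG, if two non-adjacent nodes `j` and `k` are d-separated by a
set `S`, then the restriction `S' = S ∩ an({j, k})` of `S` to ancestors of `j` or `k`
(including `j` and `k` themselves) also d-separates `j` and `k`. -/
theorem dsep_restrict_to_ancestors
    {V : Type*} [Fintype V] [DecidableEq V]
    (G : V → V → Prop) (hacy : Acyclic G)
    (j k : V) (hnadj : ¬ G j k ∧ ¬ G k j)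
    (S S' : Finset V)
    (hS' : ∀ v, v ∈ S' ↔ v ∈ S ∧ (Reaches G v j ∨ Reaches G v k))
    (hsep : DSep G S j k) :
    DSep G S' j k := by
  classical
  intro p htrail
  by_contra hnb
  obtain ⟨t0, htp, hbt⟩ := hsep p htrail
  obtain ⟨hch, hhead, hlastp, hnd⟩ := htrail
  set An : V → Prop := fun v => Reaches G v j ∨ Reaches G v k with hAn
  have hAnStep : ∀ a b, G a b → An b → An a := by
    intro a b hab hb
    rcases hb with h | h
    · exact Or.inl (Relation.ReflTransGen.head hab h)
    · exact Or.inr (Relation.ReflTransGen.head hab h)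
  have hAnReach : ∀ a b, Reaches G a b → An b → An a := by
    intro a b hab
    induction hab with
    | refl => exact id
    | tail hab hbc ih => exact fun h => ih (hAnStep _ _ hbc h)
  have hncol : ∀ t ∈ triples p, ¬ BlockedTriple G S' t := fun t ht h => hnb ⟨t, ht, h⟩
  have hcolAn : ∀ t ∈ triples p, G t.1 t.2.1 → G t.2.2 t.2.1 →
      (∃ d, Reaches G t.2.1 d ∧ d ∈ S') := by
    intro t ht h1 h2
    have h := hncol t ht
    unfold BlockedTriple at h
    push_neg at h
    exact h.1 h1 h2
  have hcolAn' : ∀ t ∈ triples p, G t.1 t.2.1 → G t.2.2 t.2.1 → An t.2.1 := by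
    intro t ht h1 h2
    obtain ⟨d, hd, hdS⟩ := hcolAn t ht h1 h2
    exact hAnReach _ _ hd ((hS' d).mp hdS).2
  obtain ⟨x, m, z⟩ := t0
  rcases hbt with ⟨h1, h2, hnod⟩ | ⟨hnc, hmS⟩
  · -- collider case: contradiction with activity wrt S'
    obtain ⟨d, hd, hdS⟩ := hcolAn (x, m, z) htp h1 h2
    exact hnod d hd ((hS' d).mp hdS).1
  · -- non-collider case: show m is an ancestor of j or k
    obtain ⟨l, r, hp⟩ := mem_triples_elim htp
    have hsuf : (x :: m :: z :: r) <:+ p := ⟨l, hp.symm⟩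
    have hchs := hch.suffix hsuf
    have hexm : G x m ∨ G m x := (List.isChain_cons_cons.mp hchs).1
    have hemz : G m z ∨ G z m := (List.isChain_cons_cons.mp (List.isChain_cons_cons.mp hchs).2).1
    simp only [not_and] at hnc
    have hAnm : An m := by
      rcases hexm with hxm | hmx
      · -- then ¬ G z m, so G m z : go forward toward k
        have hmz : G m z := by
          rcases hemz with h | h
          · exact h
          · exact absurd h (hnc hxm)
        have hsuf2 : (m :: z :: r) <:+ p := ⟨l ++ [x], by simp [hp]⟩
        have hlastq : (m :: z :: r).getLast? = some k := by
          obtain ⟨s, hs⟩ := hsuf2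
          rw [← hs, List.getLast?_append] at hlastp
          simpa using hlastp
        refine forward_lemma G An hAnStep r m z k (hch.suffix hsuf2) hlastq
          (Or.inr Relation.ReflTransGen.refl) ?_ hmz
        intro t ht
        obtain ⟨s, hs⟩ := hsuf2
        exact hcolAn' t (by rw [← hs]; exact triples_suffix_subset s _ ht)
      · -- go backward toward j, along the reversed prefix
        set pf : List V := l ++ [x, m] with hpf
        have hp' : p = pf ++ z :: r := by simp [hp, hpf]
        have hchpf : pf.Chain' (fun u v => G u v ∨ G v u) := hch.prefix ⟨z :: r, hp'.symm⟩
        have hchq : pf.reverse.Chain' (fun u v => G u v ∨ G v u) := by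
          refine List.isChain_reverse.mpr ?_
          exact hchpf.imp (fun a b h => Or.symm h)
        have hq : pf.reverse = m :: x :: l.reverse := by simp [hpf]
        have hlastq : pf.reverse.getLast? = some j := by
          rw [List.getLast?_reverse]
          rw [hp', List.head?_append] at hhead
          obtain ⟨a, ha⟩ : ∃ a, pf.head? = some a := by
            rw [hpf]; rcases l with _ | ⟨b, l⟩ <;> exact ⟨_, rfl⟩
          rw [ha] at hhead ⊢
          simpa using hhead
        have hcolq : ∀ t ∈ triples pf.reverse, G t.1 t.2.1 → G t.2.2 t.2.1 → An t.2.1 := by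
          rintro ⟨a, b, c⟩ ht hab hcb
          obtain ⟨l', r', hdec⟩ := mem_triples_elim ht
          have hpf2 : pf = r'.reverse ++ c :: b :: a :: l'.reverse := by
            have := congrArg List.reverse hdec
            simpa using this
          have : p = r'.reverse ++ c :: b :: a :: (l'.reverse ++ z :: r) := by
            simp [hp', hpf2]
          exact hcolAn' (c, b, a) (this ▸ mem_triples_intro c b a _ _) hcb hab
        have := forward_lemma G An hAnStep l.reverse m x j (hq ▸ hchq) (hq ▸ hlastq)
          (Or.inl Relation.ReflTransGen.refl) (hq ▸ hcolq) hmx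
        exact this
    exact hncol (x, m, z) htp (Or.inr ⟨by simpa using hnc, (hS' m).mpr ⟨hmS, hAnm⟩⟩)
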